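/- Let c > 0 and let z : ℝ → ℝ be a bounded Lipschitz function such that for every t ∈ ℝ, limsup_{h → 0⁺} (z(t) − z(t−h))/h ≤ −c z(t). Then z(t) ≤ 0 for all t ∈ ℝ. -/

import Mathlib

open MeasureTheory Metric Set Filter Topology

noncomputable section

/-- Euclidean space ℝ^N. -/
abbrev Euc (N : ℕ) : Type := EuclideanSpace ℝ (Fin N)

/-- The Laplacian of `u : Euc N → ℝ` at `x`, as the trace of the second derivative. -/
def lap {N : ℕ} (u : Euc N → ℝ) (x : Euc N) : ℝ :=
  ∑ i : Fin N,
    iteratedFDeriv ℝ 2 u x ![EuclideanSpace.single i (1 : ℝ), EuclideanSpace.single i (1 : ℝ)]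

/-- `Ω` is a bounded, open, connected subset of ℝ^N. -/
def NiceDomain {N : ℕ} (Ω : Set (Euc N)) : Prop :=
  IsOpen Ω ∧ IsConnected Ω ∧ Bornology.IsBounded Ω

/-- Hypothesis (a): `f` is continuously differentiable on `[0,∞)`, `f 0 = 0` and
`f s < 0` for `s > 1`. -/
def NiceReaction (f : ℝ → ℝ) : Prop :=
  ContDiffOn ℝ 1 f (Ici (0 : ℝ)) ∧ f 0 = 0 ∧ ∀ s > (1 : ℝ), f s < 0

/-- The limit nonlinearity `h(w) = α f(α⁻¹ w⁺) − g(−w⁻)`. -/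
def hlim (f g : ℝ → ℝ) (α : ℝ) (w : ℝ) : ℝ :=
  α * f (α⁻¹ * max w 0) - g (-(min w 0))

/-- All three `W^{2,p}(Ω)`-norm pieces of `w` (function, gradient, Hessian) are
bounded by `C` in `L^p(Ω)`. -/
def W2pBound {N : ℕ} (p : ℝ) (Ω : Set (Euc N)) (w : Euc N → ℝ) (C : ℝ) : Prop :=
  eLpNorm w (ENNReal.ofReal p) (volume.restrict Ω) ≤ ENNReal.ofReal C ∧
  eLpNorm (fun x => ‖fderiv ℝ w x‖) (ENNReal.ofReal p) (volume.restrict Ω) ≤ ENNReal.ofReal C ∧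
  eLpNorm (fun x => ‖iteratedFDeriv ℝ 2 w x‖) (ENNReal.ofReal p) (volume.restrict Ω) ≤
    ENNReal.ofReal C

/-- `w` belongs to `W^{2,p}(Ω)`; since `p > N` such functions have classical regularity,
which we record as part of the definition. -/
def MemW2p {N : ℕ} (p : ℝ) (Ω : Set (Euc N)) (w : Euc N → ℝ) : Prop :=
  ContDiffOn ℝ 2 w Ω ∧ ContinuousOn w (closure Ω) ∧ ∃ C, W2pBound p Ω w C

/-- The `C^{1,lam}(S)` norm of `w` is at most `ε`. -/
def C1HolderSmall {N : ℕ} (lam : ℝ) (S : Set (Euc N)) (w : Euc N → ℝ) (ε : ℝ) : Prop :=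
  (∀ x ∈ S, |w x| ≤ ε ∧ ‖fderiv ℝ w x‖ ≤ ε) ∧
  ∀ x ∈ S, ∀ y ∈ S, ‖fderiv ℝ w x - fderiv ℝ w y‖ ≤ ε * ‖x - y‖ ^ lam

/-- Hypothesis (b1) for a single pair of boundary data: `m₁, m₂ ≥ 0` and
`m₁, m₂ ∈ W^{2,p}(Ω)`. -/
def B1 {N : ℕ} (p : ℝ) (Ω : Set (Euc N)) (m1 m2 : Euc N → ℝ) : Prop :=
  (∀ x ∈ closure Ω, 0 ≤ m1 x ∧ 0 ≤ m2 x) ∧ MemW2p p Ω m1 ∧ MemW2p p Ω m2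

/-- Hypothesis (b2): `m₁ᵏ, m₂ᵏ` are bounded in `W^{2,p}(Ω)` independently of `k`. -/
def B2 {N : ℕ} (p : ℝ) (Ω : Set (Euc N)) (m1k m2k : ℕ → Euc N → ℝ) : Prop :=
  ∃ C, ∀ k, W2pBound p Ω (m1k k) C ∧ W2pBound p Ω (m2k k) C

/-- Hypothesis (b3): there are `m₁, m₂ ∈ W^{2,p}(Ω)` with `α m₁ − m₂` not identically
zero on `∂Ω` such that `mᵢᵏ → mᵢ` in `C^{1,λ'}(closure Ω)` for every `λ' ∈ (0, 1 − N/p)`. -/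
def B3 {N : ℕ} (p α : ℝ) (Ω : Set (Euc N)) (m1k m2k : ℕ → Euc N → ℝ)
    (m1 m2 : Euc N → ℝ) : Prop :=
  MemW2p p Ω m1 ∧ MemW2p p Ω m2 ∧ (∃ x ∈ frontier Ω, α * m1 x - m2 x ≠ 0) ∧
  ∀ lam' ∈ Ioo (0 : ℝ) (1 - (N : ℝ) / p), ∀ ε > (0 : ℝ), ∃ K : ℕ, ∀ k ≥ K,
    C1HolderSmall lam' (closure Ω) (fun x => m1k k x - m1 x) ε ∧
    C1HolderSmall lam' (closure Ω) (fun x => m2k k x - m2 x) ε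

/-- `(u,v)` is a solution of problem `(P_k)` on `Ω × (0,∞)` with boundary data `m₁, m₂`
and initial data `u₀, v₀`. -/
def IsSolPk {N : ℕ} (Ω : Set (Euc N)) (f g : ℝ → ℝ) (α k : ℝ)
    (m1 m2 u0 v0 : Euc N → ℝ) (u v : Euc N → ℝ → ℝ) : Prop :=
  ContinuousOn (fun q : Euc N × ℝ => u q.1 q.2) (closure Ω ×ˢ Ici (0 : ℝ)) ∧
  ContinuousOn (fun q : Euc N × ℝ => v q.1 q.2) (closure Ω ×ˢ Ici (0 : ℝ)) ∧
  (∀ t > (0 : ℝ), ContDiffOn ℝ 2 (fun x => u x t) Ω ∧ ContDiffOn ℝ 2 (fun x => v x t) Ω) ∧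
  (∀ x ∈ Ω, ∀ t > (0 : ℝ),
    HasDerivAt (fun s => u x s) (lap (fun y => u y t) x + f (u x t) - k * u x t * v x t) t ∧
    HasDerivAt (fun s => v x s) (lap (fun y => v y t) x + g (v x t) - α * k * u x t * v x t) t) ∧
  (∀ x ∈ frontier Ω, ∀ t > (0 : ℝ), u x t = m1 x ∧ v x t = m2 x) ∧
  (∀ x ∈ Ω, u x 0 = u0 x ∧ v x 0 = v0 x)

/-- `(u,v)` is a solution of problem `(P_{k,T})`, i.e. of `(P_k)` on `Ω × (0,T)`. -/
def IsSolPkT {N : ℕ} (Ω : Set (Euc N)) (f g : ℝ → ℝ) (α k : ℝ)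
    (m1 m2 u0 v0 : Euc N → ℝ) (u v : Euc N → ℝ → ℝ) (T : ℝ) : Prop :=
  ContinuousOn (fun q : Euc N × ℝ => u q.1 q.2) (closure Ω ×ˢ Icc (0 : ℝ) T) ∧
  ContinuousOn (fun q : Euc N × ℝ => v q.1 q.2) (closure Ω ×ˢ Icc (0 : ℝ) T) ∧
  (∀ t ∈ Ioo (0 : ℝ) T, ContDiffOn ℝ 2 (fun x => u x t) Ω ∧ ContDiffOn ℝ 2 (fun x => v x t) Ω) ∧
  (∀ x ∈ Ω, ∀ t ∈ Ioo (0 : ℝ) T,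
    HasDerivAt (fun s => u x s) (lap (fun y => u y t) x + f (u x t) - k * u x t * v x t) t ∧
    HasDerivAt (fun s => v x s) (lap (fun y => v y t) x + g (v x t) - α * k * u x t * v x t) t) ∧
  (∀ x ∈ frontier Ω, ∀ t ∈ Ioo (0 : ℝ) T, u x t = m1 x ∧ v x t = m2 x) ∧
  (∀ x ∈ Ω, u x 0 = u0 x ∧ v x 0 = v0 x)

/-- `(u,v)` is an entire solution (defined for all `t ∈ ℝ`) of the `k`-dependent system
with boundary data `m₁, m₂`. -/
def IsSolPkEntire {N : ℕ} (Ω : Set (Euc N)) (f g : ℝ → ℝ) (α k : ℝ)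
    (m1 m2 : Euc N → ℝ) (u v : Euc N → ℝ → ℝ) : Prop :=
  ContinuousOn (fun q : Euc N × ℝ => u q.1 q.2) (closure Ω ×ˢ (univ : Set ℝ)) ∧
  ContinuousOn (fun q : Euc N × ℝ => v q.1 q.2) (closure Ω ×ˢ (univ : Set ℝ)) ∧
  (∀ t : ℝ, ContDiffOn ℝ 2 (fun x => u x t) Ω ∧ ContDiffOn ℝ 2 (fun x => v x t) Ω) ∧
  (∀ x ∈ Ω, ∀ t : ℝ,
    HasDerivAt (fun s => u x s) (lap (fun y => u y t) x + f (u x t) - k * u x t * v x t) t ∧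
    HasDerivAt (fun s => v x s) (lap (fun y => v y t) x + g (v x t) - α * k * u x t * v x t) t) ∧
  (∀ x ∈ frontier Ω, ∀ t : ℝ, u x t = m1 x ∧ v x t = m2 x)

/-- `w` is a solution of the stationary limit problem `(S)`:
`Δw + h(w) = 0` in `Ω`, `w = α m₁ − m₂` on `∂Ω`. -/
def IsSolS {N : ℕ} (Ω : Set (Euc N)) (f g : ℝ → ℝ) (α p : ℝ)
    (m1 m2 : Euc N → ℝ) (w : Euc N → ℝ) : Prop :=
  MemW2p p Ω w ∧ (∀ x ∈ Ω, lap w x + hlim f g α (w x) = 0) ∧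
  ∀ x ∈ frontier Ω, w x = α * m1 x - m2 x

/-- The solution `wt` of `(S)` is non-degenerate: the only `W^{2,p}` solution of the
linearised problem `Δw + h'(wt) w = 0` a.e. in `Ω`, `w = 0` on `∂Ω`, is `w ≡ 0`. -/
def NonDegenS {N : ℕ} (Ω : Set (Euc N)) (f g : ℝ → ℝ) (α p : ℝ) (wt : Euc N → ℝ) : Prop :=
  ∀ w : Euc N → ℝ, MemW2p p Ω w →
    (∀ᵐ x ∂(volume.restrict Ω), lap w x + deriv (hlim f g α) (wt x) * w x = 0) →
    (∀ x ∈ frontier Ω, w x = 0) → ∀ x ∈ Ω, w x = 0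

/-- `(u,v)` is a non-negative stationary solution of `(P_k)`. -/
def IsStatPk {N : ℕ} (Ω : Set (Euc N)) (f g : ℝ → ℝ) (α k : ℝ)
    (m1 m2 : Euc N → ℝ) (u v : Euc N → ℝ) : Prop :=
  ContDiffOn ℝ 2 u Ω ∧ ContDiffOn ℝ 2 v Ω ∧
  ContinuousOn u (closure Ω) ∧ ContinuousOn v (closure Ω) ∧
  (∀ x ∈ closure Ω, 0 ≤ u x ∧ 0 ≤ v x) ∧
  (∀ x ∈ Ω, lap u x + f (u x) - k * u x * v x = 0 ∧
            lap v x + g (v x) - α * k * u x * v x = 0) ∧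
  (∀ x ∈ frontier Ω, u x = m1 x ∧ v x = m2 x)

/-- The `L^q(Ω)` distance between two functions. -/
def LqDist {N : ℕ} (q : ℝ) (Ω : Set (Euc N)) (w1 w2 : Euc N → ℝ) : ENNReal :=
  eLpNorm (fun x => w1 x - w2 x) (ENNReal.ofReal q) (volume.restrict Ω)

/-- differential inequality in Lemma 7: a bounded Lipschitz `z : ℝ → ℝ`
with `limsup_{h→0⁺} (z(t) − z(t−h))/h ≤ −c z(t)` for all `t` is non-positive. -/
theorem stmt_19 (c : ℝ) (hc : 0 < c)
    (z : ℝ → ℝ) (K : NNReal) (hz : LipschitzWith K z)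
    (B : ℝ) (hbd : ∀ t, |z t| ≤ B)
    (hineq : ∀ t : ℝ,
      Filter.limsup (fun h : ℝ => (z t - z (t - h)) / h) (𝓝[>] (0 : ℝ)) ≤ -c * z t) :
    ∀ t, z t ≤ 0 := by
  intro t
  by_contra hpos
  push_neg at hpos
  set g : ℝ → ℝ := fun s => -z (-s) with hg
  have hgcont : Continuous g := (hz.continuous.comp continuous_neg).neg
  -- key slope estimate for g
  have hslope : ∀ x : ℝ, ∀ r, c * g x < r →
      ∃ᶠ y in 𝓝[>] x, (y - x)⁻¹ * (g y - g x) < r := by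
    intro x r hr
    have key : Filter.limsup (fun h : ℝ => (z (-x) - z (-x - h)) / h) (𝓝[>] (0:ℝ)) < r := by
      refine lt_of_le_of_lt (hineq (-x)) ?_
      have heq : -c * z (-x) = c * g x := by simp only [hg]; ring
      rw [heq]; exact hr
    have hbdd : Filter.IsBoundedUnder (· ≤ ·) (𝓝[>] (0:ℝ))
        (fun h : ℝ => (z (-x) - z (-x - h)) / h) := by
      refine ⟨(K : ℝ), eventually_nhdsWithin_of_forall (fun h hh => ?_)⟩
      have hh0 : (0:ℝ) < h := hh
      have := hz.dist_le_mul (-x) (-x - h)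
      rw [Real.dist_eq, Real.dist_eq] at this
      have habs : |z (-x) - z (-x - h)| ≤ (K : ℝ) * h := by
        simpa [abs_of_pos hh0] using this
      have h2 := (abs_le.1 habs).2
      show (z (-x) - z (-x - h)) / h ≤ (K : ℝ)
      rw [div_le_iff₀ hh0]
      linarith
    have hev : ∀ᶠ h in 𝓝[>] (0:ℝ), (z (-x) - z (-x - h)) / h < r :=
      Filter.eventually_lt_of_limsup_lt key hbdd
    have htend : Tendsto (fun y : ℝ => y - x) (𝓝[>] x) (𝓝[>] (0:ℝ)) := by
      apply tendsto_nhdsWithin_of_tendsto_nhds_of_eventually_within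
      · have h0 : Tendsto (fun y : ℝ => y - x) (𝓝 x) (𝓝 (x - x)) :=
          ((continuous_sub_right x).tendsto x)
        rw [sub_self] at h0
        exact h0.mono_left nhdsWithin_le_nhds
      · exact eventually_nhdsWithin_of_forall fun y hy => by
          simp only [mem_Ioi] at hy ⊢; linarith
    have hev' : ∀ᶠ y in 𝓝[>] x, (z (-x) - z (-x - (y - x))) / (y - x) < r :=
      htend.eventually hev
    refine hev'.frequently.mono fun y hy => ?_
    have : (y - x)⁻¹ * (g y - g x) = (z (-x) - z (-x - (y - x))) / (y - x) := by
      have : -x - (y - x) = -y := by ring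
      rw [this]
      simp [hg, inv_mul_eq_div]
      ring_nf
    rw [this]; exact hy
  -- Gronwall on [-t, b]
  have main : ∀ b : ℝ, ∀ x ∈ Icc (-t) b, g x ≤ g (-t) * Real.exp (c * (x - (-t))) := by
    intro b x hx
    have := le_gronwallBound_of_liminf_deriv_right_le (f := g) (f' := fun x => c * g x)
      (δ := g (-t)) (K := c) (ε := 0) (a := -t) (b := b)
      hgcont.continuousOn
      (fun x _ r hr => hslope x r hr)
      le_rfl
      (fun x _ => by simp)
      x hx
    simpa [gronwallBound_ε0] using this
  -- contradiction
  have hB : 0 < B := lt_of_lt_of_le (lt_of_lt_of_le hpos (le_abs_self _)) (hbd t)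
  set s : ℝ := (B / z t + 1) / c with hs
  have hs0 : 0 < s := by positivity
  have h1 : g (-t + s) ≤ g (-t) * Real.exp (c * s) := by
    have := main (-t + s) (-t + s) ⟨by linarith, le_rfl⟩
    simpa using this
  have hga : g (-t) = -z t := by simp [hg]
  have hexp : c * s ≤ Real.exp (c * s) := by
    linarith [Real.add_one_le_exp (c * s)]
  have hcs : c * s = B / z t + 1 := by
    field_simp [hs]
    rw [hs]; field_simp
  have hgb : -B ≤ g (-t + s) := by
    have h2 := (abs_le.1 (hbd (-(-t + s)))).2
    have h3 : g (-t + s) = -z (-(-t + s)) := rfl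
    rw [h3]; linarith
  have : g (-t) * Real.exp (c * s) ≤ -z t * (c * s) := by
    rw [hga]
    have : z t * (c * s) ≤ z t * Real.exp (c * s) :=
      mul_le_mul_of_nonneg_left hexp (le_of_lt hpos)
    linarith
  have hfin : -B ≤ -z t * (B / z t + 1) := by
    calc -B ≤ g (-t + s) := hgb
    _ ≤ g (-t) * Real.exp (c * s) := h1
    _ ≤ -z t * (c * s) := this
    _ = -z t * (B / z t + 1) := by rw [hcs]
  have : -z t * (B / z t + 1) = -B - z t := by
    field_simp
    ring
  linarith [this ▸ hfin]
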